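/- Let m: ℝ² × ℝ → [0,1] be any function, and for parameter τ ≤ 0 define the frozen pendulum vector field f(x,t,τ) = (x₂, −x₁ − (1 + τ m(x,t)) x₂). Then the function V(x) = x₁² + x₂² + x₁x₂ satisfies ∇V(x) · f(x,t,τ) ≤ −(1 + 5τ) V(x) for all x ∈ ℝ², t ∈ ℝ, and τ ≤ 0. -/
import Mathlib

theorem pendulum_frozen_decay
    (m : ℝ → ℝ → ℝ → ℝ) (hm : ∀ x₁ x₂ t, 0 ≤ m x₁ x₂ t ∧ m x₁ x₂ t ≤ 1)
    (τ : ℝ) (hτ : τ ≤ 0) (x₁ x₂ t : ℝ) :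
    (2 * x₁ + x₂) * x₂
      + (2 * x₂ + x₁) * (-x₁ - (1 + τ * m x₁ x₂ t) * x₂)
      ≤ -(1 + 5 * τ) * (x₁ ^ 2 + x₂ ^ 2 + x₁ * x₂) := by
  obtain ⟨h0, h1⟩ := hm x₁ x₂ t
  set μ := τ * m x₁ x₂ t with hμ
  have hμ0 : μ ≤ 0 := mul_nonpos_of_nonpos_of_nonneg hτ h0
  have hμτ : τ ≤ μ := by nlinarith
  nlinarith [sq_nonneg (x₁ + x₂), sq_nonneg (x₁ - x₂), sq_nonneg x₁, sq_nonneg x₂,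
    mul_nonneg (neg_nonneg.2 hμ0) (by nlinarith [sq_nonneg (2*x₁ + 3*x₂)] : (0:ℝ) ≤ 5*x₁^2 + 7*x₂^2 + 6*x₁*x₂),
    mul_nonneg (sub_nonneg.2 hμτ) (by nlinarith [sq_nonneg (x₁ + x₂)] : (0:ℝ) ≤ 5*x₁^2 + 3*x₂^2 + 4*x₁*x₂)]
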